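/- Let q ≥ 1 and let a_1, ..., a_n be residues mod q, each coprime to q. Let P ⊆ Z/qZ with |P| = k. Then the number of the 2^n sums ∑_{i=1}^n δ_i a_i with each δ_i ∈ {1, -1} that lie in P is at most the sum of the k middle mod-r binomial coefficients ∑_{j : (n-k)/2 ≤ j < (n+k)/2} C(n,j)_r, where r = q if q is odd and r = q/2 if q is even. -/

import Mathlib

/-- The mod-q binomial coefficient `C(n,s)_q = ∑_{0 ≤ j ≤ n, j ≡ s (mod q)} C(n,j)`. -/
def modBinom (n q : ℕ) (s : ℤ) : ℕ :=
  ∑ j ∈ Finset.range (n + 1), if ((j : ℤ) - s) % (q : ℤ) = 0 then n.choose j else 0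

/-- The sum of the `k` middle mod-`q` binomial coefficients,
`_{(n-k)/2 ≤ j < (n+k)/2} C(n,j)_q` (the integers `j` in question all lie in `[-q, n+q]`
when `k ≤ q`). -/
noncomputable def middleSum (n q k : ℕ) : ℕ :=
  ∑ j ∈ Finset.Icc (-(q : ℤ)) ((n : ℤ) + q),
    if (n : ℤ) - k ≤ 2 * j ∧ 2 * j < (n : ℤ) + k then modBinom n q j else 0

lemma emod_zero_iff (a b : ℤ) : a % b = 0 ↔ b ∣ a := EuclideanDomain.mod_eq_zero

lemma modBinom_congr {r : ℕ} {s t : ℤ} (h : (r:ℤ) ∣ s - t) (n : ℕ) :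
    modBinom n r s = modBinom n r t := by
  unfold modBinom
  refine Finset.sum_congr rfl fun j _ => ?_
  congr 1
  simp only [emod_zero_iff]
  refine propext ⟨fun h' => ?_, fun h' => ?_⟩
  · rw [show (j:ℤ) - t = ((j:ℤ) - s) + (s - t) by ring]
    exact dvd_add h' h
  · rw [show (j:ℤ) - s = ((j:ℤ) - t) - (s - t) by ring]
    exact dvd_sub h' h

lemma modBinom_symm (n r : ℕ) (s : ℤ) : modBinom n r s = modBinom n r ((n:ℤ) - s) := by
  unfold modBinom
  rw [← Finset.sum_range_reflect]
  refine Finset.sum_congr rfl fun j hj => ?_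
  simp only [Finset.mem_range] at hj
  have hj' : j ≤ n := by omega
  simp only [Nat.add_sub_cancel]
  rw [Nat.choose_symm hj']
  congr 1
  simp only [emod_zero_iff]
  have hc : ((n - j : ℕ) : ℤ) = (n:ℤ) - j := by push_cast [hj']; ring
  refine propext ⟨fun h' => ?_, fun h' => ?_⟩
  · rw [show ((j:ℤ) - ((n:ℤ) - s)) = -(((n - j : ℕ):ℤ) - s) by rw [hc]; ring]
    exact dvd_neg.mpr h'
  · rw [show (((n - j : ℕ):ℤ) - s) = -((j:ℤ) - ((n:ℤ) - s)) by rw [hc]; ring]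
    exact dvd_neg.mpr h'

lemma modBinom_pascal (n r : ℕ) (s : ℤ) :
    modBinom (n+1) r s = modBinom n r s + modBinom n r (s-1) := by
  have hc : ∀ j : ℕ, ((((j:ℕ)+1 : ℕ)):ℤ) - s = ((j:ℤ) - (s-1)) := by
    intro j; push_cast; ring
  unfold modBinom
  rw [Finset.sum_range_succ' (fun j => if ((j : ℤ) - s) % (r : ℤ) = 0 then (n+1).choose j else 0) (n+1)]
  have hterm : ∀ j ∈ Finset.range (n+1),
      (if (((j+1 : ℕ) : ℤ) - s) % (r : ℤ) = 0 then (n+1).choose (j+1) else 0)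
      = (if ((j : ℤ) - (s-1)) % (r : ℤ) = 0 then n.choose j else 0)
        + (if (((j+1:ℕ) : ℤ) - s) % (r : ℤ) = 0 then n.choose (j+1) else 0) := by
    intro j _
    rw [Nat.choose_succ_succ, hc j]
    split <;> simp
  rw [Finset.sum_congr rfl hterm, Finset.sum_add_distrib]
  have h2 : (∑ j ∈ Finset.range (n+1), if (((j+1:ℕ) : ℤ) - s) % (r : ℤ) = 0 then n.choose (j+1) else 0)
      + (if (((0:ℕ) : ℤ) - s) % (r : ℤ) = 0 then (n+1).choose 0 else 0)
      = ∑ j ∈ Finset.range (n+1), if ((j : ℤ) - s) % (r : ℤ) = 0 then n.choose j else 0 := by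
    have h0 : (if (((0:ℕ) : ℤ) - s) % (r : ℤ) = 0 then (n+1).choose 0 else 0)
        = (if (((0:ℕ) : ℤ) - s) % (r : ℤ) = 0 then n.choose 0 else 0) := by simp
    rw [h0, ← Finset.sum_range_succ'
      (fun j => if ((j : ℤ) - s) % (r : ℤ) = 0 then n.choose j else 0) (n+1),
      Finset.sum_range_succ]
    simp
  rw [add_assoc, h2, add_comm]

/-- left endpoint of the centered window of length `k`. -/
def wlo (n k : ℕ) : ℤ := ((n:ℤ) - k + 1) / 2

lemma wlo_spec (n k : ℕ) : (n:ℤ) - k ≤ 2 * wlo n k ∧ 2 * wlo n k ≤ (n:ℤ) - k + 1 := by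
  unfold wlo; omega

/-- the middle-window sum, as a sum over `Ico`. -/
noncomputable def Mid (n r k : ℕ) : ℕ := ∑ j ∈ Finset.Ico (wlo n k) (wlo n k + k), modBinom n r j

/-- Any window of `r` consecutive `j`'s has `modBinom` summing to `2^n`. -/
lemma window_sum (n r : ℕ) (hr : 1 ≤ r) (t : ℤ) :
    ∑ j ∈ Finset.Ico t (t + r), modBinom n r j = 2^n := by
  unfold modBinom
  rw [Finset.sum_comm]
  · rw [← Nat.sum_range_choose n]
    refine Finset.sum_congr rfl fun i _ => ?_
    have hr' : (0:ℤ) < r := by exact_mod_cast hr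
    set j0 : ℤ := t + ((i:ℤ) - t) % r with hj0
    rw [Finset.sum_eq_single j0]
    · have : (((i:ℤ) - j0) % r) = 0 := by
        have h1 : ((i:ℤ) - j0) = ((i:ℤ) - t) - ((i:ℤ) - t) % r := by rw [hj0]; ring
        rw [h1, Int.sub_emod, Int.emod_emod_of_dvd _ dvd_rfl, sub_self, Int.zero_emod]
      simp [this]
    · intro b hb hbne
      simp only [Finset.mem_Ico] at hb
      rw [if_neg]
      intro hcon
      apply hbne
      have hd : (r:ℤ) ∣ (j0 - b) := by
        have h1 : (r:ℤ) ∣ ((i:ℤ) - b) := (emod_zero_iff _ _).mp hcon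
        have h2 : (r:ℤ) ∣ ((i:ℤ) - j0) := by
          have h1' : ((i:ℤ) - j0) = ((i:ℤ) - t) - ((i:ℤ) - t) % r := by rw [hj0]; ring
          rw [h1']
          exact Int.dvd_self_sub_of_emod_eq rfl
        rw [show j0 - b = ((i:ℤ) - b) - ((i:ℤ) - j0) by ring]
        exact dvd_sub h1 h2
      have hm0 : 0 ≤ ((i:ℤ) - t) % r := Int.emod_nonneg _ (by omega)
      have hm1 : ((i:ℤ) - t) % r < r := Int.emod_lt_of_pos _ hr'
      obtain ⟨c, hcc⟩ := hd
      have hc0 : c = 0 := by nlinarith [hb.1, hb.2]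
      rw [hc0, mul_zero] at hcc
      omega
    · intro hj0n
      exfalso
      apply hj0n
      simp only [Finset.mem_Ico]
      have hm0 : 0 ≤ ((i:ℤ) - t) % r := Int.emod_nonneg _ (by omega)
      have hm1 : ((i:ℤ) - t) % r < r := Int.emod_lt_of_pos _ hr'
      omega

/-- Key unimodality: within half a period above the center, `modBinom` is non-increasing. -/
lemma modBinom_star (r : ℕ) : ∀ n : ℕ, ∀ j : ℤ, (n:ℤ) ≤ 2*j → 2*j + 2 ≤ (n:ℤ) + r →
    modBinom n r (j+1) ≤ modBinom n r j := by
  intro n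
  induction n with
  | zero =>
    intro j h1 h2
    have hz : modBinom 0 r (j+1) = 0 := by
      have hnd : ¬ (((0:ℕ):ℤ) - (j+1)) % r = 0 := by
        rw [emod_zero_iff]
        intro hd
        have hd' : (r:ℤ) ∣ (j+1) := by
          rw [show (j+1 : ℤ) = -((((0:ℕ):ℤ)) - (j+1)) by push_cast; ring]
          exact dvd_neg.mpr hd
        have := Int.le_of_dvd (by omega) hd'
        omega
      unfold modBinom
      rw [Finset.sum_range_one, if_neg hnd]
    rw [hz]
    exact Nat.zero_le _
  | succ n IH =>
    intro j h1 h2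
    have hps : (n:ℤ) + 1 ≤ 2*j := by push_cast at h1 ⊢; omega
    have hps2 : 2*j + 2 ≤ (n:ℤ) + 1 + r := by push_cast at h2 ⊢; omega
    rw [modBinom_pascal, modBinom_pascal, show ((j:ℤ)+1-1) = j by ring]
    have key : modBinom n r (j+1) ≤ modBinom n r (j-1) := by
      have elow : 2*j = (n:ℤ)+1 → modBinom n r (j-1) = modBinom n r j := by
        intro hl
        rw [modBinom_symm n r (j-1), show ((n:ℤ) - (j-1)) = j by omega]
      have eup : 2*j + 2 = (n:ℤ) + 1 + r → modBinom n r (j+1) = modBinom n r j := by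
        intro hu
        rw [modBinom_symm n r (j+1)]
        apply modBinom_congr
        rw [show ((n:ℤ)-(j+1)) - j = -(r:ℤ) by omega]
        exact dvd_neg.mpr dvd_rfl
      by_cases hlow : 2*j = (n:ℤ)+1
      · by_cases hup : 2*j + 2 = (n:ℤ) + 1 + r
        · rw [elow hlow, eup hup]
        · rw [elow hlow]
          exact IH j (by omega) (by omega)
      · have e1 : modBinom n r j ≤ modBinom n r (j-1) := by
          have h := IH (j-1) (by omega) (by omega)
          rw [sub_add_cancel] at h
          exact h
        by_cases hup : 2*j + 2 ≤ (n:ℤ) + r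
        · exact le_trans (IH j (by omega) hup) e1
        · rw [eup (by omega)]
          exact e1
    omega

lemma sum_Ico_bot (f : ℤ → ℕ) (a b : ℤ) (h : a < b) :
    ∑ j ∈ Finset.Ico a b, f j = f a + ∑ j ∈ Finset.Ico (a+1) b, f j := by
  have he : Finset.Ico a b = insert a (Finset.Ico (a+1) b) := by
    ext x; simp only [Finset.mem_Ico, Finset.mem_insert]; omega
  rw [he, Finset.sum_insert (by simp only [Finset.mem_Ico]; omega)]

lemma sum_Ico_top (f : ℤ → ℕ) (a b : ℤ) (h : a ≤ b) :
    ∑ j ∈ Finset.Ico a (b+1), f j = ∑ j ∈ Finset.Ico a b, f j + f b := by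
  have he : Finset.Ico a (b+1) = insert b (Finset.Ico a b) := by
    ext x; simp only [Finset.mem_Ico, Finset.mem_insert]; omega
  rw [he, Finset.sum_insert (by simp only [Finset.mem_Ico]; omega), add_comm]

lemma sum_Ico_shift (f : ℤ → ℕ) (a b : ℤ) :
    ∑ j ∈ Finset.Ico a b, f (j-1) = ∑ j ∈ Finset.Ico (a-1) (b-1), f j := by
  rw [show Finset.Ico (a-1) (b-1) = (Finset.Ico a b).map (addRightEmbedding (-1)) by
    rw [Finset.map_add_right_Ico]; congr 1 <;> try ring]
  rw [Finset.sum_map]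
  exact Finset.sum_congr rfl fun x _ => by
    simp only [addRightEmbedding_apply]; congr 1; try ring

lemma Mid_rec (n r k : ℕ) :
    Mid (n+1) r (k+1) = Mid n r (k+2) + Mid n r k := by
  set L := wlo (n+1) (k+1) with hL
  have hs := wlo_spec (n+1) (k+1)
  have hs1 := wlo_spec n (k+2)
  have hs0 := wlo_spec n k
  have e1 : wlo n (k+2) = L - 1 := by push_cast at hs hs1; omega
  have e0 : wlo n k = L := by push_cast at hs hs0; omega
  unfold Mid
  rw [← hL, e1, e0]
  have c1 : ((k+1:ℕ):ℤ) = (k:ℤ)+1 := by push_cast; ring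
  have c2 : ((k+2:ℕ):ℤ) = (k:ℤ)+2 := by push_cast; ring
  rw [c1, c2]
  have hps : ∀ j ∈ Finset.Ico L (L+((k:ℤ)+1)),
      modBinom (n+1) r j = modBinom n r j + modBinom n r (j-1) :=
    fun j _ => modBinom_pascal n r j
  rw [Finset.sum_congr rfl hps, Finset.sum_add_distrib, sum_Ico_shift (modBinom n r)]
  have h2 : ∑ j ∈ Finset.Ico (L-1) (L-1+((k:ℤ)+2)), modBinom n r j
      = modBinom n r (L-1) + ∑ j ∈ Finset.Ico L (L+((k:ℤ)+1)), modBinom n r j := by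
    rw [sum_Ico_bot (modBinom n r) (L-1) _ (by omega),
      show (L-1)+1 = L by ring, show L-1+((k:ℤ)+2) = L+((k:ℤ)+1) by ring]
  have h1 : ∑ j ∈ Finset.Ico (L-1) (L+((k:ℤ)+1)-1), modBinom n r j
      = modBinom n r (L-1) + ∑ j ∈ Finset.Ico L (L+(k:ℤ)), modBinom n r j := by
    rw [sum_Ico_bot (modBinom n r) (L-1) _ (by omega),
      show (L-1)+1 = L by ring, show L+((k:ℤ)+1)-1 = L+(k:ℤ) by ring]
  have h3 : ∑ j ∈ Finset.Ico L (L+((k:ℤ)+1)), modBinom n r j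
      = ∑ j ∈ Finset.Ico L (L+(k:ℤ)), modBinom n r j + modBinom n r (L+k) := by
    rw [show L+((k:ℤ)+1) = (L+(k:ℤ))+1 by ring, sum_Ico_top (modBinom n r) _ _ (by omega)]
  rw [h2, h1, h3]
  omega

lemma Mid_mono (n r k : ℕ) : Mid n r k ≤ Mid n r (k+1) := by
  unfold Mid
  apply Finset.sum_le_sum_of_subset
  intro x hx
  simp only [Finset.mem_Ico] at hx ⊢
  have hs0 := wlo_spec n k
  have hs1 := wlo_spec n (k+1)
  push_cast at hs1 ⊢
  omega

lemma Mid_concave (n r k : ℕ) (hk : k + 2 ≤ r) :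
    Mid n r k + Mid n r (k+2) ≤ 2 * Mid n r (k+1) := by
  set L := wlo n k with hL
  have hs0 := wlo_spec n k
  have hs1 := wlo_spec n (k+1)
  have hs2 := wlo_spec n (k+2)
  have c1 : ((k+1:ℕ):ℤ) = (k:ℤ)+1 := by push_cast; ring
  have c2 : ((k+2:ℕ):ℤ) = (k:ℤ)+2 := by push_cast; ring
  rcases (by omega : 2 * L = (n:ℤ) - k ∨ 2 * L = (n:ℤ) - k + 1) with hpar | hpar
  · -- window grows right then left
    have e1 : wlo n (k+1) = L := by push_cast at hs1; omega
    have e2 : wlo n (k+2) = L - 1 := by push_cast at hs2; omega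
    unfold Mid
    rw [← hL, e1, e2, c1, c2]
    have h2 : ∑ j ∈ Finset.Ico (L-1) (L-1+((k:ℤ)+2)), modBinom n r j
        = modBinom n r (L-1) + ∑ j ∈ Finset.Ico L (L+((k:ℤ)+1)), modBinom n r j := by
      rw [sum_Ico_bot (modBinom n r) (L-1) _ (by omega),
        show (L-1)+1 = L by ring, show L-1+((k:ℤ)+2) = L+((k:ℤ)+1) by ring]
    have h1 : ∑ j ∈ Finset.Ico L (L+((k:ℤ)+1)), modBinom n r j
        = ∑ j ∈ Finset.Ico L (L+(k:ℤ)), modBinom n r j + modBinom n r (L+k) := by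
      rw [show L+((k:ℤ)+1) = (L+(k:ℤ))+1 by ring, sum_Ico_top (modBinom n r) _ _ (by omega)]
    have key : modBinom n r (L-1) ≤ modBinom n r (L+k) := by
      have hsym : modBinom n r (L-1) = modBinom n r ((L+(k:ℤ))+1) := by
        rw [modBinom_symm n r (L-1), show ((n:ℤ) - (L-1)) = (L+(k:ℤ))+1 by omega]
      rw [hsym]
      exact modBinom_star r n (L+k) (by push_cast; omega) (by push_cast; omega)
    rw [h2, h1]
    omega
  · -- window grows left then right
    have e1 : wlo n (k+1) = L - 1 := by push_cast at hs1; omega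
    have e2 : wlo n (k+2) = L - 1 := by push_cast at hs2; omega
    unfold Mid
    rw [← hL, e1, e2, c1, c2]
    have h2 : ∑ j ∈ Finset.Ico (L-1) (L-1+((k:ℤ)+2)), modBinom n r j
        = ∑ j ∈ Finset.Ico (L-1) (L-1+((k:ℤ)+1)), modBinom n r j + modBinom n r (L+k) := by
      rw [show L-1+((k:ℤ)+2) = (L-1+((k:ℤ)+1))+1 by ring,
        sum_Ico_top (modBinom n r) _ _ (by omega), show L-1+((k:ℤ)+1) = L+(k:ℤ) by ring]
    have h1 : ∑ j ∈ Finset.Ico (L-1) (L-1+((k:ℤ)+1)), modBinom n r j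
        = modBinom n r (L-1) + ∑ j ∈ Finset.Ico L (L+(k:ℤ)), modBinom n r j := by
      rw [sum_Ico_bot (modBinom n r) (L-1) _ (by omega),
        show (L-1)+1 = L by ring, show L-1+((k:ℤ)+1) = L+(k:ℤ) by ring]
    have key : modBinom n r (L+k) = modBinom n r (L-1) := by
      rw [modBinom_symm n r (L-1), show ((n:ℤ) - (L-1)) = L+(k:ℤ) by omega]
    rw [h2, h1, key]
    omega

noncomputable def Bcap (n r k : ℕ) : ℕ := Mid n r (min k r)

lemma Mid_le_mono (n r : ℕ) {k m : ℕ} (h : k ≤ m) : Mid n r k ≤ Mid n r m := by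
  induction m with
  | zero => simp_all
  | succ m IH =>
    rcases Nat.lt_or_ge k (m+1) with h' | h'
    · exact le_trans (IH (by omega)) (Mid_mono n r m)
    · have : k = m+1 := by omega
      simp [this]

lemma Mid_full (n r : ℕ) (hr : 1 ≤ r) : Mid n r r = 2^n := window_sum n r hr (wlo n r)

lemma Mid_zero (n r : ℕ) : Mid n r 0 = 0 := by
  unfold Mid
  simp

lemma Mid0_pos (r k : ℕ) (hk : 1 ≤ k) : 1 ≤ Mid 0 r k := by
  unfold Mid
  have hs := wlo_spec 0 k
  have h0 : (0:ℤ) ∈ Finset.Ico (wlo 0 k) (wlo 0 k + k) := by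
    simp only [Finset.mem_Ico]
    push_cast at hs ⊢
    omega
  have h1 : modBinom 0 r 0 = 1 := by
    unfold modBinom
    rw [Finset.sum_range_one]
    simp
  calc 1 = modBinom 0 r 0 := h1.symm
  _ ≤ _ := Finset.single_le_sum (fun i _ => Nat.zero_le _) h0

lemma Bcap_le_Mid (n r k : ℕ) : Bcap n r k ≤ Mid n r k :=
  Mid_le_mono n r (min_le_left _ _)

lemma Mid_step (n r : ℕ) : ∀ m' m : ℕ, m' ≤ m → m + 1 ≤ r →
    Mid n r (m+1) + Mid n r m' ≤ Mid n r m + Mid n r (m'+1) := by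
  intro m' m
  induction m with
  | zero =>
    intro h _
    have : m' = 0 := by omega
    subst this
    omega
  | succ m IH =>
    intro h hr
    rcases Nat.eq_or_lt_of_le h with he | hlt
    · subst he
      omega
    · have IH' := IH (by omega) (by omega)
      have hA := Mid_concave n r m (by omega)
      rw [show m+1+1 = m+2 by omega]
      omega

lemma Bcap_step (n r : ℕ) {m' m : ℕ} (h : m' ≤ m) :
    Bcap n r (m+1) + Bcap n r m' ≤ Bcap n r m + Bcap n r (m'+1) := by
  unfold Bcap
  rcases Nat.lt_or_ge m r with hm | hm
  · rw [min_eq_left (by omega : m+1 ≤ r), min_eq_left (by omega : m ≤ r),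
      min_eq_left (by omega : m' ≤ r), min_eq_left (by omega : m'+1 ≤ r)]
    exact Mid_step n r m' m h (by omega)
  · rw [show min (m+1) r = r from min_eq_right (by omega),
      show min m r = r from min_eq_right (by omega)]
    have : min m' r ≤ min (m'+1) r := min_le_min_right r (by omega)
    have := Mid_le_mono n r this
    omega

lemma Bconc (n r : ℕ) : ∀ (d k u i : ℕ), u = k + 1 + d → u + i = 2 * k →
    Bcap n r u + Bcap n r i ≤ Bcap n r (k+1) + Bcap n r (k-1) := by
  intro d
  induction d with
  | zero =>
    intro k u i hu hui
    have h1 : u = k+1 := by omega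
    have h2 : i = k-1 := by omega
    rw [h1, h2]
  | succ d IH =>
    intro k u i hu hui
    have h2 := Bcap_step n r (by omega : i ≤ u - 1)
    rw [show (u-1)+1 = u by omega] at h2
    exact le_trans h2 (IH k (u-1) (i+1) (by omega) (by omega))

set_option linter.deprecated false in
lemma main_count (q r : ℕ) [NeZero q] (hr : 1 ≤ r)
    (horder : ∀ x : ZMod q, IsUnit x → r ≤ addOrderOf (x + x)) :
    ∀ (n : ℕ) (a : Fin n → ZMod q), (∀ i, IsUnit (a i)) → ∀ P : Finset (ZMod q),
    ((Finset.univ : Finset (Fin n → Bool)).filter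
        (fun δ => (∑ i, if δ i then a i else -a i) ∈ P)).card ≤ Bcap n r P.card := by
  intro n
  induction n with
  | zero =>
    intro a ha P
    rcases Nat.eq_zero_or_pos P.card with hc | hc
    · have : P = ∅ := Finset.card_eq_zero.mp hc
      subst this
      simp
    · have h1 : ((Finset.univ : Finset (Fin 0 → Bool)).filter
          (fun δ => (∑ i, if δ i then a i else -a i) ∈ P)).card ≤ 1 := by
        have h2 := Finset.card_filter_le (Finset.univ : Finset (Fin 0 → Bool))
          (fun δ => (∑ i, if δ i then a i else -a i) ∈ P)
        have h3 : (Finset.univ : Finset (Fin 0 → Bool)).card = 1 := by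
          rw [Finset.card_univ, Fintype.card_fun]; simp
        exact le_trans h2 (le_of_eq h3)
      refine le_trans h1 ?_
      unfold Bcap
      exact Mid0_pos r _ (le_min hc hr)
  | succ n IH =>
    intro a ha P
    rcases Nat.eq_zero_or_pos P.card with hc | hc
    · have : P = ∅ := Finset.card_eq_zero.mp hc
      subst this
      simp
    rcases Nat.lt_or_ge P.card r with hkr | hkr
    swap
    · -- trivial bound 2^(n+1)
      have h1 : ((Finset.univ : Finset (Fin (n+1) → Bool)).filter
          (fun δ => (∑ i, if δ i then a i else -a i) ∈ P)).card ≤ 2^(n+1) := by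
        have h2 := Finset.card_filter_le (Finset.univ : Finset (Fin (n+1) → Bool))
          (fun δ => (∑ i, if δ i then a i else -a i) ∈ P)
        have h3 : (Finset.univ : Finset (Fin (n+1) → Bool)).card = 2^(n+1) := by
          rw [Finset.card_univ, Fintype.card_fun]; simp
        exact le_trans h2 (le_of_eq h3)
      unfold Bcap
      rw [min_eq_right hkr, Mid_full _ _ hr]
      exact h1
    · -- main case 1 ≤ k < r
      set k := P.card with hk
      have ha0 := ha 0
      set a' : Fin n → ZMod q := fun i => a i.succ with ha'def
      have ha' : ∀ i, IsUnit (a' i) := fun i => ha i.succ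
      set X := P.image (fun x => x - a 0) with hXdef
      set Y := P.image (fun x => x + a 0) with hYdef
      have hmemX : ∀ z : ZMod q, z ∈ X ↔ z + a 0 ∈ P := by
        intro z
        rw [hXdef]
        simp only [Finset.mem_image]
        constructor
        · rintro ⟨w, hw, rfl⟩
          rwa [sub_add_cancel]
        · intro hz
          exact ⟨z + a 0, hz, add_sub_cancel_right z (a 0)⟩
      have hmemY : ∀ z : ZMod q, z ∈ Y ↔ z - a 0 ∈ P := by
        intro z
        rw [hYdef]
        simp only [Finset.mem_image]
        constructor
        · rintro ⟨w, hw, rfl⟩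
          rwa [add_sub_cancel_right]
        · intro hz
          exact ⟨z - a 0, hz, sub_add_cancel z (a 0)⟩
      have hcX : X.card = k := Finset.card_image_of_injective _ sub_left_injective
      have hcY : Y.card = k := Finset.card_image_of_injective _ (add_left_injective (a 0))
      -- split the count according to δ 0
      have hpoint : ∀ δ : Fin (n+1) → Bool,
          (if (∑ i, if δ i then a i else -a i) ∈ P then (1:ℕ) else 0)
          = (fun bp : Bool × (Fin n → Bool) =>
              if ((if bp.1 then a 0 else -a 0) + ∑ i, (if bp.2 i then a' i else -a' i)) ∈ P
              then (1:ℕ) else 0) (((Fin.consEquiv (fun _ => Bool)).symm) δ) := by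
        intro δ
        rw [Fin.sum_univ_succ (fun i => if δ i then a i else -a i)]
        rfl
      have hsplit :
          ((Finset.univ : Finset (Fin (n+1) → Bool)).filter
            (fun δ => (∑ i, if δ i then a i else -a i) ∈ P)).card
          = ((Finset.univ : Finset (Fin n → Bool)).filter
              (fun δ => (∑ i, if δ i then a' i else -a' i) ∈ X)).card
            + ((Finset.univ : Finset (Fin n → Bool)).filter
              (fun δ => (∑ i, if δ i then a' i else -a' i) ∈ Y)).card := by
        rw [Finset.card_filter, Finset.card_filter, Finset.card_filter]
        rw [Fintype.sum_equiv ((Fin.consEquiv (fun _ => Bool)).symm)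
          (fun δ => if (∑ i, if δ i then a i else -a i) ∈ P then 1 else 0)
          (fun bp : Bool × (Fin n → Bool) =>
            if ((if bp.1 then a 0 else -a 0) + ∑ i, (if bp.2 i then a' i else -a' i)) ∈ P
            then 1 else 0)
          hpoint]
        rw [Fintype.sum_prod_type, Fintype.sum_bool]
        congr 1
        · refine Finset.sum_congr rfl fun δ' _ => ?_
          show (if ((a 0) + ∑ i, (if δ' i then a' i else -a' i)) ∈ P then (1:ℕ) else 0) = _
          congr 1
          rw [eq_iff_iff, hmemX, add_comm]
        · refine Finset.sum_congr rfl fun δ' _ => ?_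
          show (if ((-a 0) + ∑ i, (if δ' i then a' i else -a' i)) ∈ P then (1:ℕ) else 0) = _
          congr 1
          rw [eq_iff_iff, hmemY, neg_add_eq_sub]
      -- union/intersection exchange
      have hunion :
          ((Finset.univ : Finset (Fin n → Bool)).filter
              (fun δ => (∑ i, if δ i then a' i else -a' i) ∈ X)).card
            + ((Finset.univ : Finset (Fin n → Bool)).filter
              (fun δ => (∑ i, if δ i then a' i else -a' i) ∈ Y)).card
          = ((Finset.univ : Finset (Fin n → Bool)).filter
              (fun δ => (∑ i, if δ i then a' i else -a' i) ∈ X ∪ Y)).card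
            + ((Finset.univ : Finset (Fin n → Bool)).filter
              (fun δ => (∑ i, if δ i then a' i else -a' i) ∈ X ∩ Y)).card := by
        rw [Finset.card_filter, Finset.card_filter, Finset.card_filter, Finset.card_filter,
          ← Finset.sum_add_distrib, ← Finset.sum_add_distrib]
        refine Finset.sum_congr rfl fun δ' _ => ?_
        by_cases hx : (∑ i, if δ' i then a' i else -a' i) ∈ X <;>
          by_cases hy : (∑ i, if δ' i then a' i else -a' i) ∈ Y <;>
          simp [Finset.mem_union, Finset.mem_inter, hx, hy]
      -- X ≠ Y
      have hXY : X ≠ Y := by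
        intro he
        have hstep : ∀ z ∈ P, z + (a 0 + a 0) ∈ P := by
          intro z hz
          have h1 : z + a 0 ∈ Y := (hmemY _).mpr (by rwa [add_sub_cancel_right])
          rw [← he] at h1
          have h2 := (hmemX _).mp h1
          rwa [add_assoc] at h2
        obtain ⟨y0, hy0⟩ := Finset.card_pos.mp hc
        set g := a 0 + a 0 with hg
        have hmul : ∀ m : ℕ, y0 + m • g ∈ P := by
          intro m
          induction m with
          | zero => simpa using hy0
          | succ m IHm =>
            have h2 := hstep _ IHm
            rw [succ_nsmul, ← add_assoc]
            exact h2
        have hkey : ∀ m m' : ℕ, m < m' → m' < r → y0 + m • g = y0 + m' • g → False := by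
          intro m m' hlt hm' heq
          have hcan : m • g = m' • g := add_left_cancel heq
          have h0 : (m' - m) • g = 0 := by
            rw [sub_nsmul g (le_of_lt hlt), ← hcan, add_neg_cancel]
          have h1 := addOrderOf_le_of_nsmul_eq_zero (Nat.sub_pos_of_lt hlt) h0
          have h2 := horder (a 0) ha0
          rw [← hg] at h2
          exact Nat.lt_irrefl r
            (lt_of_le_of_lt (le_trans (le_trans h2 h1) (Nat.sub_le m' m)) hm')
        have hinj : Set.InjOn (fun m : ℕ => y0 + m • g) ↑(Finset.range r) := by
          intro m hm m' hm' heq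
          simp only [Finset.coe_range, Set.mem_Iio] at hm hm'
          rcases Nat.lt_trichotomy m m' with h | h | h
          · exact absurd heq (fun hh => hkey m m' h hm' hh)
          · exact h
          · exact absurd heq.symm (fun hh => hkey m' m h hm hh)
        have hrk : r ≤ P.card := by
          have hsub : (Finset.range r).image (fun m => y0 + m • g) ⊆ P := by
            intro z hz
            simp only [Finset.mem_image] at hz
            obtain ⟨m, _, rfl⟩ := hz
            exact hmul m
          calc r = (Finset.range r).card := (Finset.card_range r).symm
            _ = ((Finset.range r).image (fun m => y0 + m • g)).card :=
                (Finset.card_image_of_injOn hinj).symm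
            _ ≤ P.card := Finset.card_le_card hsub
        exact absurd hrk (Nat.not_le.mpr hkr)
      -- cardinalities
      have hui : (X ∪ Y).card + (X ∩ Y).card = 2 * k := by
        rw [Finset.card_union_add_card_inter, hcX, hcY]
        ring
      have hIlt : (X ∩ Y).card < k := by
        rcases Nat.lt_or_ge (X ∩ Y).card k with h | h
        · exact h
        · exfalso
          have hsub : X ∩ Y ⊆ X := Finset.inter_subset_left
          have he1 : X ∩ Y = X := Finset.eq_of_subset_of_card_le hsub (by rw [hcX]; exact h)
          have hXsubY : X ⊆ Y := by rw [← he1]; exact Finset.inter_subset_right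
          exact hXY (Finset.eq_of_subset_of_card_le hXsubY (by rw [hcX, hcY]))
      have hIH1 := IH a' ha' (X ∪ Y)
      have hIH2 := IH a' ha' (X ∩ Y)
      obtain ⟨u, hu⟩ : ∃ m, m = (X ∪ Y).card := ⟨_, rfl⟩
      obtain ⟨iv, hi⟩ : ∃ m, m = (X ∩ Y).card := ⟨_, rfl⟩
      rw [← hu] at hui hIH1
      rw [← hi] at hui hIlt hIH2
      have hBc := Bconc n r (u - (k+1)) k u iv
        (by clear hpoint hsplit hunion hIH1 hIH2 hmemX hmemY; omega)
        (by clear hpoint hsplit hunion hIH1 hIH2 hmemX hmemY; omega)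
      have hfin : Bcap n r (k+1) + Bcap n r (k-1) = Bcap (n+1) r k := by
        clear hpoint hsplit hunion hIH1 hIH2 hBc hmemX hmemY
        unfold Bcap
        rw [min_eq_left (by omega : k+1 ≤ r), min_eq_left (by omega : k-1 ≤ r),
          min_eq_left (by omega : k ≤ r)]
        have hrec := Mid_rec n r (k-1)
        rw [show (k-1)+1 = k by omega, show (k-1)+2 = k+1 by omega] at hrec
        omega
      calc ((Finset.univ : Finset (Fin (n+1) → Bool)).filter
            (fun δ => (∑ i, if δ i then a i else -a i) ∈ P)).card
          = _ + _ := hsplit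
        _ = _ + _ := hunion
        _ ≤ Bcap n r u + Bcap n r iv := Nat.add_le_add hIH1 hIH2
        _ ≤ Bcap n r (k+1) + Bcap n r (k-1) := hBc
        _ = Bcap (n+1) r k := hfin

lemma middleSum_eq (n r k : ℕ) (hk : (k:ℤ) ≤ (n:ℤ) + 2*r + 1) :
    middleSum n r k = Mid n r k := by
  unfold middleSum Mid
  rw [← Finset.sum_filter]
  refine Finset.sum_congr ?_ (fun _ _ => rfl)
  ext j
  simp only [Finset.mem_filter, Finset.mem_Icc, Finset.mem_Ico]
  have hs := wlo_spec n k
  omega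

theorem griggs_pm_version (q n k : ℕ) [NeZero q] (a : Fin n → ZMod q)
    (ha : ∀ i, IsUnit (a i)) (P : Finset (ZMod q)) (hP : P.card = k) :
    ((Finset.univ : Finset (Fin n → Bool)).filter
        (fun δ => (∑ i, if δ i then a i else -a i) ∈ P)).card ≤
      middleSum n (if q % 2 = 1 then q else q / 2) k := by
  set r := if q % 2 = 1 then q else q / 2 with hrdef
  have hq : 1 ≤ q := Nat.one_le_iff_ne_zero.mpr (NeZero.ne q)
  have hqr : (q = r ∧ q % 2 = 1) ∨ (q = 2*r ∧ q % 2 = 0) := by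
    rw [hrdef]
    rcases Nat.mod_two_eq_zero_or_one q with h | h <;> simp [h] <;> omega
  have hr : 1 ≤ r := by rcases hqr with ⟨h1, h2⟩ | ⟨h1, h2⟩ <;> omega
  have horder : ∀ x : ZMod q, IsUnit x → r ≤ addOrderOf (x + x) := by
    intro x hx
    set o := addOrderOf (x + x) with ho
    have hopos : 0 < o := addOrderOf_pos _
    have hzero : o • (x + x) = 0 := addOrderOf_nsmul_eq_zero _
    have h2o : ((2 * o : ℕ) : ZMod q) * x = 0 := by
      have he : o • (x + x) = ((2*o : ℕ) : ZMod q) * x := by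
        rw [smul_add, nsmul_eq_mul]
        push_cast
        ring
      rw [← he, hzero]
    obtain ⟨u, hu⟩ := hx
    rw [← hu] at h2o
    have hq2 : ((2 * o : ℕ) : ZMod q) = 0 := by
      have he2 : ((2*o:ℕ):ZMod q) = (((2*o:ℕ):ZMod q) * ↑u) * ↑u⁻¹ := by
        rw [mul_assoc, Units.mul_inv, mul_one]
      rw [he2, h2o, zero_mul]
    have hdvd : q ∣ 2 * o := (ZMod.natCast_eq_zero_iff _ q).mp hq2
    rcases hqr with ⟨h1, h2⟩ | ⟨h1, h2⟩
    · have hco : Nat.Coprime q 2 := Nat.coprime_two_right.mpr (Nat.odd_iff.mpr h2)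
      have hdo : q ∣ o := hco.dvd_of_dvd_mul_left hdvd
      have := Nat.le_of_dvd hopos hdo
      omega
    · have := Nat.le_of_dvd (by omega) hdvd
      omega
  have hkq : k ≤ q := by
    rw [← hP]
    have h1 := Finset.card_le_univ P
    rwa [ZMod.card q] at h1
  calc ((Finset.univ : Finset (Fin n → Bool)).filter
        (fun δ => (∑ i, if δ i then a i else -a i) ∈ P)).card
      ≤ Bcap n r P.card := main_count q r hr horder n a ha P
    _ ≤ Mid n r P.card := Bcap_le_Mid n r P.card
    _ = middleSum n r k := by
        rw [hP]
        exact (middleSum_eq n r k (by push_cast; omega)).symm
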